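/- Every meromorphic function on the complex plane that is algebraic over the field ℂ(z) of rational functions is itself a rational function. Consequently, if all coefficients a_i of the equation y^{(n)} + a_1 y^{(n-1)} + … + a_n y = 0 are polynomials in ℂ[z], then the extension of ℂ(z) obtained by adjoining all (entire) solutions of the equation is pure transcendental. -/

import Mathlib

open Finset

section AuxMAIRPT
open Filter Topology



lemma entire_poly_growth : ∀ (d : ℕ) (v : ℂ → ℂ) (C : ℝ), Differentiable ℂ v →
    (∀ z, ‖v z‖ ≤ C * (1 + ‖z‖) ^ d) → ∃ p : Polynomial ℂ, ∀ z, v z = p.eval z := by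
  intro d
  induction d with
  | zero =>
    intro v C hv hb
    obtain ⟨a, ha⟩ := hv.exists_eq_const_of_bounded (Metric.isBounded_range_iff.2 ⟨2*C, by
      rintro x y
      calc dist (v x) (v y) ≤ ‖v x‖ + ‖v y‖ := dist_le_norm_add_norm _ _
        _ ≤ 2*C := by have := hb x; have := hb y; simp only [pow_zero, mul_one] at *; linarith⟩)
    exact ⟨Polynomial.C a, fun z => by simp [ha]⟩
  | succ d ih =>
    intro v C hv hb
    have hC : 0 ≤ C := by
      have := hb 0
      simp only [norm_zero, add_zero, one_pow, mul_one] at this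
      exact le_trans (norm_nonneg _) this
    set g : ℂ → ℂ := dslope v 0 with hg
    have hgd : Differentiable ℂ g := by
      intro z
      rcases eq_or_ne z 0 with rfl | hz
      · obtain ⟨p, hp⟩ := hv.analyticAt 0
        exact (hp.has_fpower_series_dslope_fslope).analyticAt.differentiableAt
      · exact (differentiableAt_dslope_of_ne hz).2 (hv z)
    obtain ⟨z₀, -, hz₀⟩ := (isCompact_closedBall (0:ℂ) 1).exists_isMaxOn
      (Metric.nonempty_closedBall.2 zero_le_one) (hgd.continuous.norm.continuousOn)
    set K := ‖g z₀‖ with hKdef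
    have hK : ∀ z ∈ Metric.closedBall (0:ℂ) 1, ‖g z‖ ≤ K := fun z hz => hz₀ hz
    have hK0 : 0 ≤ K := norm_nonneg _
    have hgb : ∀ z, ‖g z‖ ≤ (K + 3 * C) * (1 + ‖z‖) ^ d := by
      intro z
      set P := (1 + ‖z‖) ^ d with hPdef
      have hP1 : (1:ℝ) ≤ P := one_le_pow₀ (by linarith [norm_nonneg z])
      have hP0 : (0:ℝ) ≤ P := by linarith
      rcases le_or_gt ‖z‖ 1 with hz1 | hz1
      · calc ‖g z‖ ≤ K := hK z (by simpa [Metric.mem_closedBall, dist_eq_norm] using hz1)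
          _ ≤ (K + 3*C) * P := by nlinarith
      · have hz0 : z ≠ 0 := by intro h; simp [h] at hz1; linarith
        have h0 : z * g z = v z - v 0 := by simpa using sub_smul_dslope v 0 z
        have hvz := hb z
        have hv0 := hb 0
        simp only [norm_zero, add_zero, one_pow, mul_one] at hv0
        have hnum : ‖z‖ * ‖g z‖ ≤ C * (1 + ‖z‖)^(d+1) + C := by
          rw [← norm_mul, h0]
          exact le_trans (norm_sub_le _ _) (by linarith)
        have hzpos : (0:ℝ) < ‖z‖ := by positivity
        have e1 : (1 + ‖z‖)^(d+1) = P * (1+‖z‖) := by rw [hPdef]; ring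
        rw [e1] at hnum
        have f1 : C*P ≤ C*(P*‖z‖) := by nlinarith [mul_nonneg (mul_nonneg hC hP0) (le_of_lt (sub_pos.2 hz1))]
        have f2 : C ≤ C*(P*‖z‖) := by nlinarith [mul_nonneg hC (by nlinarith : (0:ℝ) ≤ P*‖z‖ - 1)]
        have f3 : 0 ≤ K*(P*‖z‖) := by positivity
        -- ‖z‖ * ‖g z‖ ≤ C*P*(1+‖z‖) + C ≤ (K+3C)*P*‖z‖
        have key : ‖z‖ * ‖g z‖ ≤ ((K + 3*C) * P) * ‖z‖ := by nlinarith
        have := (mul_le_mul_iff_left₀ hzpos).1 (by linarith [key] : ‖g z‖ * ‖z‖ ≤ ((K + 3*C) * P) * ‖z‖)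
        linarith
    obtain ⟨p, hp⟩ := ih g (K + 3*C) hgd hgb
    refine ⟨Polynomial.X * p + Polynomial.C (v 0), fun z => ?_⟩
    have h0 : z * g z = v z - v 0 := by simpa using sub_smul_dslope v 0 z
    rw [hp z] at h0
    simp only [Polynomial.eval_add, Polynomial.eval_mul, Polynomial.eval_X, Polynomial.eval_C]
    linear_combination -h0


lemma merom_bounded_ext {u : ℂ → ℂ} {x : ℂ} (hu : MeromorphicAt u x) {C : ℝ}
    (hb : ∀ᶠ z in 𝓝[≠] x, ‖u z‖ ≤ C) :
    ∃ g : ℂ → ℂ, AnalyticAt ℂ g x ∧ ∀ᶠ z in 𝓝[≠] x, u z = g z := by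
  rcases eq_or_ne (meromorphicOrderAt u x) ⊤ with ho | ho
  · exact ⟨fun _ => 0, analyticAt_const, (meromorphicOrderAt_eq_top_iff.1 ho).mono fun z hz => hz⟩
  obtain ⟨m, hm⟩ := WithTop.ne_top_iff_exists.mp ho
  obtain ⟨g, hg, hgx, hfg⟩ := (meromorphicOrderAt_eq_int_iff (n := m) hu).1 hm.symm
  rcases le_or_gt 0 m with hm0 | hm0
  · refine ⟨fun z => (z - x) ^ m.toNat * g z, ?_, ?_⟩
    · exact (((analyticAt_id.sub analyticAt_const).pow _).mul hg)
    · filter_upwards [hfg] with z hz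
      rw [hz, smul_eq_mul]
      have : (z - x) ^ m = (z - x) ^ m.toNat := by
        conv_lhs => rw [← Int.toNat_of_nonneg hm0]
        exact zpow_natCast _ _
      rw [this]
  · exfalso
    set n : ℕ := (-m).toNat with hn
    have hmn : m = -(n : ℤ) := by omega
    have hgc : Tendsto (fun z => ‖g z‖) (𝓝[≠] x) (𝓝 ‖g x‖) :=
      (hg.continuousAt.norm.continuousWithinAt).tendsto
    have hge : ∀ᶠ z in 𝓝[≠] x, ‖g x‖ / 2 ≤ ‖g z‖ := by
      have hpos : ‖g x‖ / 2 < ‖g x‖ := by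
        have : 0 < ‖g x‖ := norm_pos_iff.2 hgx
        linarith
      filter_upwards [hgc.eventually_const_lt hpos] with z hz using hz.le
    have htend : Tendsto (fun z : ℂ => ‖z - x‖⁻¹ ^ n * (‖g x‖ / 2)) (𝓝[≠] x) atTop := by
      have h1 : Tendsto (fun z : ℂ => ‖z - x‖) (𝓝[≠] x) (𝓝[>] 0) := by
        apply tendsto_nhdsWithin_of_tendsto_nhds_of_eventually_within
        · exact ((continuous_id.sub continuous_const).norm.tendsto' x 0 (by simp)).mono_left
            nhdsWithin_le_nhds
        · refine eventually_mem_nhdsWithin.mono fun z hz => ?_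
          simpa [Set.mem_Ioi, norm_pos_iff, sub_ne_zero] using hz
      have h2 : Tendsto (fun z : ℂ => ‖z - x‖⁻¹) (𝓝[≠] x) atTop :=
        tendsto_inv_nhdsGT_zero.comp h1
      have h3 : Tendsto (fun z : ℂ => ‖z - x‖⁻¹ ^ n) (𝓝[≠] x) atTop := by
        refine (tendsto_pow_atTop (by omega : n ≠ 0)).comp h2
      have hgxpos : 0 < ‖g x‖ := norm_pos_iff.2 hgx
      exact h3.atTop_mul_const (by linarith)
    have hev := htend.eventually_gt_atTop C
    have : ∀ᶠ z in 𝓝[≠] x, False := by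
      filter_upwards [hb, hfg, hge, hev, self_mem_nhdsWithin] with z h1 h2 h3 h4 h5
      have hzx : z - x ≠ 0 := sub_ne_zero.2 h5
      have hnorm : ‖u z‖ = ‖z - x‖⁻¹ ^ n * ‖g z‖ := by
        rw [h2, smul_eq_mul, norm_mul, hmn]
        rw [zpow_neg, zpow_natCast, norm_inv, norm_pow, inv_pow]
      have : ‖z - x‖⁻¹ ^ n * (‖g x‖ / 2) ≤ ‖u z‖ := by
        rw [hnorm]
        exact mul_le_mul_of_nonneg_left h3 (by positivity)
      linarith
    obtain ⟨z, hz⟩ := this.exists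
    exact hz


lemma poly_bound (p : Polynomial ℂ) :
    ∃ C : ℝ, 0 ≤ C ∧ ∀ z : ℂ, ‖p.eval z‖ ≤ C * (1 + ‖z‖) ^ p.natDegree := by
  refine ⟨∑ i ∈ Finset.range (p.natDegree + 1), ‖p.coeff i‖,
    Finset.sum_nonneg fun _ _ => norm_nonneg _, fun z => ?_⟩
  rw [Polynomial.eval_eq_sum_range]
  calc ‖∑ i ∈ Finset.range (p.natDegree + 1), p.coeff i * z ^ i‖
      ≤ ∑ i ∈ Finset.range (p.natDegree + 1), ‖p.coeff i * z ^ i‖ := norm_sum_le _ _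
    _ ≤ ∑ i ∈ Finset.range (p.natDegree + 1), ‖p.coeff i‖ * (1 + ‖z‖) ^ p.natDegree := by
        apply Finset.sum_le_sum
        intro i hi
        rw [norm_mul, norm_pow]
        apply mul_le_mul_of_nonneg_left _ (norm_nonneg _)
        calc ‖z‖ ^ i ≤ (1 + ‖z‖) ^ i := by
              apply pow_le_pow_left₀ (norm_nonneg _) (by linarith)
          _ ≤ (1 + ‖z‖) ^ p.natDegree := by
              apply pow_le_pow_right₀ (by linarith [norm_nonneg z])
              exact Nat.lt_succ_iff.1 (Finset.mem_range.1 hi)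
    _ = (∑ i ∈ Finset.range (p.natDegree + 1), ‖p.coeff i‖) * (1 + ‖z‖) ^ p.natDegree := by
        rw [Finset.sum_mul]

lemma sum_poly_bound (N : ℕ) (β : ℕ → Polynomial ℂ) :
    ∃ (C : ℝ) (d : ℕ), 0 ≤ C ∧ ∀ z : ℂ,
      1 + ∑ i ∈ Finset.range N, ‖(β i).eval z‖ ≤ C * (1 + ‖z‖) ^ d := by
  choose Cb hCb0 hCb using fun i => poly_bound (β i)
  refine ⟨1 + ∑ i ∈ Finset.range N, Cb i, (Finset.range N).sup (fun i => (β i).natDegree),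
    le_of_lt (add_pos_of_pos_of_nonneg one_pos (Finset.sum_nonneg fun i _ => hCb0 i)), fun z => ?_⟩
  set d := (Finset.range N).sup (fun i => (β i).natDegree) with hd
  have h1 : (1:ℝ) ≤ (1 + ‖z‖) ^ d := one_le_pow₀ (by linarith [norm_nonneg z])
  have hterm : ∀ i ∈ Finset.range N, ‖(β i).eval z‖ ≤ Cb i * (1 + ‖z‖) ^ d := by
    intro i hi
    refine le_trans (hCb i z) (mul_le_mul_of_nonneg_left ?_ (hCb0 i))
    exact pow_le_pow_right₀ (by linarith [norm_nonneg z]) (hd ▸ Finset.le_sup (f := fun i => (β i).natDegree) hi)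
  calc 1 + ∑ i ∈ Finset.range N, ‖(β i).eval z‖
      ≤ (1 + ‖z‖) ^ d + ∑ i ∈ Finset.range N, Cb i * (1 + ‖z‖) ^ d := by
        gcongr with i hi
        exacts [hterm i hi]
    _ = (1 + ∑ i ∈ Finset.range N, Cb i) * (1 + ‖z‖) ^ d := by
        rw [add_mul, one_mul, Finset.sum_mul]


lemma countable_nonanalytic {f : ℂ → ℂ} (hf : MeromorphicOn f Set.univ) :
    {z : ℂ | ¬ AnalyticAt ℂ f z}.Countable := by
  set D := {z : ℂ | ¬ AnalyticAt ℂ f z} with hD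
  have hloc : ∀ x : ℂ, ∃ ε > 0, ∀ z, z ≠ x → dist z x < ε → AnalyticAt ℂ f z := by
    intro x
    have := (hf x trivial).eventually_analyticAt
    rw [eventually_nhdsWithin_iff, Metric.eventually_nhds_iff] at this
    obtain ⟨ε, hε, h⟩ := this
    exact ⟨ε, hε, fun z hz hd => h hd hz⟩
  choose ε hε hprop using hloc
  have hdisj : D.PairwiseDisjoint (fun x => Metric.ball x (ε x / 2)) := by
    intro x hx y hy hxy
    rw [Function.onFun, Set.disjoint_left]
    intro z hzx hzy
    rw [Metric.mem_ball] at hzx hzy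
    rcases le_total (ε y) (ε x) with hle | hle
    · have : dist y x < ε x := by
        calc dist y x ≤ dist y z + dist z x := dist_triangle _ _ _
          _ < ε y / 2 + ε x / 2 := by rw [dist_comm y z, dist_comm z x] at *; linarith
          _ ≤ ε x := by linarith
      exact hy (hprop x y (Ne.symm hxy) this)
    · have : dist x y < ε y := by
        calc dist x y ≤ dist x z + dist z y := dist_triangle _ _ _
          _ < ε x / 2 + ε y / 2 := by rw [dist_comm x z] at *; linarith
          _ ≤ ε y := by linarith
      exact hx (hprop y x hxy this)
  exact hdisj.countable_of_isOpen (fun x _ => Metric.isOpen_ball)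
    (fun x _ => Metric.nonempty_ball.2 (by linarith [hε x]))

lemma part1 (f : ℂ → ℂ) (hf : MeromorphicOn f Set.univ) (N : ℕ) (c : ℕ → Polynomial ℂ)
    (hcN : c N ≠ 0)
    (heq : ∀ z, AnalyticAt ℂ f z → ∑ i ∈ Finset.range (N + 1), (c i).eval z * f z ^ i = 0) :
    ∃ p q : Polynomial ℂ, q ≠ 0 ∧
      ∀ z, AnalyticAt ℂ f z → q.eval z ≠ 0 → f z = p.eval z / q.eval z := by
  rcases Nat.eq_zero_or_pos N with rfl | hN
  · exfalso
    have h0 : ∀ z, AnalyticAt ℂ f z → (c 0).eval z = 0 := by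
      intro z hz; simpa using heq z hz
    have hev : ∀ᶠ z in 𝓝[≠] (0:ℂ), (c 0).eval z = 0 :=
      (hf 0 trivial).eventually_analyticAt.mono fun z hz => h0 z hz
    rw [eventually_nhdsWithin_iff, Metric.eventually_nhds_iff] at hev
    obtain ⟨ε, hε, hball⟩ := hev
    have hroots : ∀ n : ℕ, ((ε / (n + 2) : ℝ) : ℂ) ∈ {x : ℂ | (c 0).IsRoot x} := by
      intro n
      have hpos : (0:ℝ) < ε / (n + 2) := by positivity
      have hd : dist ((ε / (n + 2) : ℝ) : ℂ) 0 < ε := by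
        rw [dist_zero_right, Complex.norm_real, Real.norm_eq_abs, abs_of_pos hpos]
        rw [div_lt_iff₀ (by positivity)]
        nlinarith
      have hne : ((ε / (n + 2) : ℝ) : ℂ) ∈ ({(0:ℂ)}ᶜ : Set ℂ) := by
        simp only [Set.mem_compl_iff, Set.mem_singleton_iff]
        exact_mod_cast fun h => hpos.ne' (by exact_mod_cast h)
      exact hball hd hne
    have hinj : Function.Injective (fun n : ℕ => ((ε / (n + 2) : ℝ) : ℂ)) := by
      intro a b hab
      simp only [Complex.ofReal_inj] at hab
      have ha' : ((a:ℝ) + 2) ≠ 0 := by positivity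
      have hb' : ((b:ℝ) + 2) ≠ 0 := by positivity
      rw [div_eq_div_iff ha' hb'] at hab
      have := mul_left_cancel₀ hε.ne' (by linarith : ε * ((b:ℝ)+2) = ε * ((a:ℝ)+2))
      exact_mod_cast (by linarith : (a:ℝ) = (b:ℝ))
    exact (Set.infinite_of_injective_forall_mem hinj hroots)
      (Polynomial.finite_setOf_isRoot hcN)
  -- main case N ≥ 1
  set u : ℂ → ℂ := fun z => (c N).eval z * f z with hu
  set β : ℕ → Polynomial ℂ := fun i => c i * (c N) ^ (N - 1 - i) with hβ
  set M : ℂ → ℝ := fun z => 1 + ∑ i ∈ Finset.range N, ‖(β i).eval z‖ with hMdef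
  have humer : ∀ x : ℂ, MeromorphicAt u x := fun x =>
    ((c N).differentiable.analyticAt x).meromorphicAt.mul (hf x trivial)
  have hM : ∀ z, AnalyticAt ℂ f z → ‖u z‖ ≤ M z := by
    intro z hz
    have hterm : ∀ i ∈ Finset.range N,
        (c N).eval z ^ (N-1) * ((c i).eval z * f z ^ i) = (β i).eval z * u z ^ i := by
      intro i hi
      have hiN : i < N := Finset.mem_range.1 hi
      have hsplit : (c N).eval z ^ (N-1) = (c N).eval z ^ (N-1-i) * (c N).eval z ^ i := by
        rw [← pow_add]; congr 1; omega
      simp only [hβ, Polynomial.eval_mul, Polynomial.eval_pow, hu, mul_pow]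
      rw [hsplit]; ring
    have hlead : (c N).eval z ^ (N-1) * ((c N).eval z * f z ^ N) = u z ^ N := by
      have hN1 : N - 1 + 1 = N := by omega
      calc (c N).eval z ^ (N-1) * ((c N).eval z * f z ^ N)
          = ((c N).eval z ^ (N-1) * (c N).eval z) * f z ^ N := by ring
        _ = (c N).eval z ^ N * f z ^ N := by rw [← pow_succ, hN1]
        _ = u z ^ N := by rw [hu]; rw [mul_pow]
    have expand : (c N).eval z ^ (N-1) * ∑ i ∈ Finset.range (N+1), (c i).eval z * f z ^ i
        = u z ^ N + ∑ i ∈ Finset.range N, (β i).eval z * u z ^ i := by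
      rw [Finset.mul_sum, Finset.sum_range_succ, Finset.sum_congr rfl hterm, hlead]
      ring
    rw [heq z hz, mul_zero] at expand
    have hkey : u z ^ N = -∑ i ∈ Finset.range N, (β i).eval z * u z ^ i := by
      linear_combination -expand
    set S := ∑ i ∈ Finset.range N, ‖(β i).eval z‖ with hS
    have hS0 : 0 ≤ S := Finset.sum_nonneg fun _ _ => norm_nonneg _
    rcases le_or_gt ‖u z‖ 1 with h1 | h1
    · simp only [hMdef]; linarith
    · have hpow : ‖u z‖ ^ N ≤ S * ‖u z‖ ^ (N-1) := by
        calc ‖u z‖ ^ N = ‖u z ^ N‖ := (norm_pow _ _).symm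
          _ = ‖∑ i ∈ Finset.range N, (β i).eval z * u z ^ i‖ := by rw [hkey, norm_neg]
          _ ≤ ∑ i ∈ Finset.range N, ‖(β i).eval z * u z ^ i‖ := norm_sum_le _ _
          _ = ∑ i ∈ Finset.range N, ‖(β i).eval z‖ * ‖u z‖ ^ i := by
              simp only [norm_mul, norm_pow]
          _ ≤ ∑ i ∈ Finset.range N, ‖(β i).eval z‖ * ‖u z‖ ^ (N-1) := by
              apply Finset.sum_le_sum
              intro i hi
              exact mul_le_mul_of_nonneg_left
                (pow_le_pow_right₀ h1.le (by have := Finset.mem_range.1 hi; omega))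
                (norm_nonneg _)
          _ = S * ‖u z‖ ^ (N-1) := by rw [hS, Finset.sum_mul]
      have hpos : 0 < ‖u z‖ ^ (N-1) := pow_pos (by linarith) _
      have hmul : ‖u z‖ * ‖u z‖ ^ (N-1) ≤ S * ‖u z‖ ^ (N-1) := by
        have e : ‖u z‖ * ‖u z‖ ^ (N-1) = ‖u z‖ ^ N := by
          rw [← pow_succ']; congr 1; omega
        rw [e]; exact hpow
      have := le_of_mul_le_mul_right (by linarith [hmul] :
        ‖u z‖ * ‖u z‖ ^ (N-1) ≤ S * ‖u z‖ ^ (N-1)) hpos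
      simp only [hMdef]; linarith
  have hMcont : Continuous M := by
    apply continuous_const.add
    exact continuous_finset_sum _ fun i _ => ((β i).continuous).norm
  have hbnd : ∀ x : ℂ, ∃ C, ∀ᶠ z in 𝓝[≠] x, ‖u z‖ ≤ C := by
    intro x
    refine ⟨M x + 1, ?_⟩
    have h1 : ∀ᶠ z in 𝓝 x, M z < M x + 1 :=
      hMcont.continuousAt.eventually_lt_const (by linarith)
    filter_upwards [h1.filter_mono nhdsWithin_le_nhds,
      (hf x trivial).eventually_analyticAt] with z hz1 hz2
    exact le_trans (hM z hz2) hz1.le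
  set v : ℂ → ℂ := fun x => limUnder (𝓝[≠] x) u with hv
  have hvg : ∀ x : ℂ, ∃ g : ℂ → ℂ, AnalyticAt ℂ g x ∧ ∀ᶠ z in 𝓝 x, v z = g z := by
    intro x
    obtain ⟨C, hC⟩ := hbnd x
    obtain ⟨g, hg, hug⟩ := merom_bounded_ext (humer x) hC
    rw [eventually_nhdsWithin_iff] at hug
    have hcomb := hug.and hg.eventually_analyticAt
    rw [eventually_nhds_iff] at hcomb
    obtain ⟨U, hUprop, hUopen, hxU⟩ := hcomb
    refine ⟨g, hg, ?_⟩
    rw [eventually_nhds_iff]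
    refine ⟨U, fun z hzU => ?_, hUopen, hxU⟩
    have hgz : ContinuousAt g z := (hUprop z hzU).2.continuousAt
    have hcong : ∀ᶠ w in 𝓝[≠] z, u w = g w := by
      rcases eq_or_ne z x with rfl | hzx
      · filter_upwards [(hUopen.eventually_mem hzU).filter_mono nhdsWithin_le_nhds,
          self_mem_nhdsWithin] with w hw hw'
        exact (hUprop w hw).1 hw'
      · filter_upwards [((hUopen.eventually_mem hzU).and
          (eventually_ne_nhds hzx)).filter_mono nhdsWithin_le_nhds] with w hw
        exact (hUprop w hw.1).1 hw.2
    have htend : Tendsto u (𝓝[≠] z) (𝓝 (g z)) :=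
      Filter.Tendsto.congr' (Filter.EventuallyEq.symm hcong) hgz.continuousWithinAt
    exact htend.limUnder_eq
  have hvan : ∀ x, AnalyticAt ℂ v x := by
    intro x
    obtain ⟨g, hg, he⟩ := hvg x
    exact hg.congr (Filter.EventuallyEq.symm he)
  have hvu : ∀ z, AnalyticAt ℂ f z → v z = u z := by
    intro z hz
    have hcu : ContinuousAt u z := ((c N).continuous.continuousAt).mul hz.continuousAt
    exact hcu.continuousWithinAt.tendsto.limUnder_eq
  have hvM : ∀ x, ‖v x‖ ≤ M x := by
    intro x
    have h1 : Tendsto (fun z => ‖v z‖) (𝓝[≠] x) (𝓝 ‖v x‖) :=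
      (hvan x).continuousAt.norm.continuousWithinAt.tendsto
    have h2 : Tendsto M (𝓝[≠] x) (𝓝 (M x)) := hMcont.continuousAt.continuousWithinAt.tendsto
    refine le_of_tendsto_of_tendsto h1 h2 ?_
    filter_upwards [(hf x trivial).eventually_analyticAt] with z hz
    rw [hvu z hz]
    exact hM z hz
  obtain ⟨C, d, hC0, hCd⟩ := sum_poly_bound N β
  obtain ⟨p, hp⟩ := entire_poly_growth d v C (fun x => (hvan x).differentiableAt)
    (fun z => le_trans (hvM z) (hCd z))
  refine ⟨p, c N, hcN, fun z hz hq => ?_⟩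
  have h1 : v z = u z := hvu z hz
  rw [hp z] at h1
  rw [eq_div_iff hq]
  rw [hu] at h1
  linear_combination -h1

lemma ball_not_countable (E : Set ℂ) (hE : E.Countable) (z₀ : ℂ) (ε : ℝ) (hε : 0 < ε) :
    ∃ z ∈ Metric.ball z₀ ε, z ∉ E ∧ z ≠ z₀ := by
  have h1 : (MeasureTheory.volume (E ∪ {z₀})) = 0 :=
    (hE.union (Set.countable_singleton _)).measure_zero _
  have h2 : 0 < MeasureTheory.volume (Metric.ball z₀ ε) := Metric.measure_ball_pos _ _ hε
  have h3 : ¬ (Metric.ball z₀ ε ⊆ E ∪ {z₀}) := by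
    intro hsub
    have := MeasureTheory.measure_mono (μ := MeasureTheory.volume) hsub
    rw [h1] at this
    exact absurd (le_antisymm this zero_le) h2.ne'
  obtain ⟨z, hz, hz2⟩ := Set.not_subset.1 h3
  exact ⟨z, hz, fun h => hz2 (Or.inl h), fun h => hz2 (Or.inr h)⟩

lemma part2 (n : ℕ) (hn : 1 ≤ n) (a : ℕ → Polynomial ℂ) (g : ℂ → ℂ)
    (hg : ∀ S : Subring (ℂ → ℂ),
        (∀ p q : Polynomial ℂ, q ≠ 0 → (fun z => p.eval z / q.eval z) ∈ S) →
        (∀ f : ℂ → ℂ, Differentiable ℂ f →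
          (∀ z, iteratedDeriv n f z +
            ∑ i ∈ Finset.range n, (a (i + 1)).eval z * iteratedDeriv (n - 1 - i) f z = 0) →
          f ∈ S) →
        (∀ h ∈ S, h⁻¹ ∈ S) → g ∈ S)
    (N : ℕ) (c : ℕ → Polynomial ℂ) (hcN : c N ≠ 0)
    (halg : ∃ E : Set ℂ, E.Countable ∧ ∀ z ∉ E,
        ∑ i ∈ Finset.range (N + 1), (c i).eval z * g z ^ i = 0) :
    ∃ p q : Polynomial ℂ, q ≠ 0 ∧
      ∃ E : Set ℂ, E.Countable ∧ ∀ z ∉ E, g z = p.eval z / q.eval z := by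
  obtain ⟨E₁, hE₁c, hE₁⟩ := halg
  set S : Subring (ℂ → ℂ) :=
  { carrier := {h : ℂ → ℂ | ∃ m : ℂ → ℂ, MeromorphicOn m Set.univ ∧
      ∃ E : Set ℂ, E.Countable ∧ ∀ z ∉ E, h z = m z}
    one_mem' := ⟨1, fun x _ => analyticAt_const.meromorphicAt, ∅, Set.countable_empty,
      fun _ _ => rfl⟩
    zero_mem' := ⟨0, fun x _ => analyticAt_const.meromorphicAt, ∅, Set.countable_empty,
      fun _ _ => rfl⟩
    mul_mem' := by
      rintro h₁ h₂ ⟨m₁, hm₁, F₁, hc₁, he₁⟩ ⟨m₂, hm₂, F₂, hc₂, he₂⟩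
      exact ⟨m₁ * m₂, hm₁.mul hm₂, F₁ ∪ F₂, hc₁.union hc₂, fun z hz => by
        simp only [Pi.mul_apply, he₁ z (fun h => hz (Or.inl h)),
          he₂ z (fun h => hz (Or.inr h))]⟩
    add_mem' := by
      rintro h₁ h₂ ⟨m₁, hm₁, F₁, hc₁, he₁⟩ ⟨m₂, hm₂, F₂, hc₂, he₂⟩
      exact ⟨m₁ + m₂, hm₁.add hm₂, F₁ ∪ F₂, hc₁.union hc₂, fun z hz => by
        simp only [Pi.add_apply, he₁ z (fun h => hz (Or.inl h)),
          he₂ z (fun h => hz (Or.inr h))]⟩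
    neg_mem' := by
      rintro h ⟨m, hm, F, hc, he⟩
      exact ⟨-m, hm.neg, F, hc, fun z hz => by simp only [Pi.neg_apply, he z hz]⟩ } with hS
  have hmem := hg S
    (by
      intro p q hq
      exact ⟨fun z => p.eval z / q.eval z,
        fun x _ => (p.differentiable.analyticAt x).meromorphicAt.div
          ((q.differentiable.analyticAt x).meromorphicAt),
        ∅, Set.countable_empty, fun _ _ => rfl⟩)
    (by
      intro f hf _
      exact ⟨f, fun x _ => (hf.analyticAt x).meromorphicAt, ∅, Set.countable_empty,
        fun _ _ => rfl⟩)
    (by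
      rintro h ⟨m, hm, F, hc, he⟩
      exact ⟨m⁻¹, hm.inv, F, hc, fun z hz => by simp only [Pi.inv_apply, he z hz]⟩)
  obtain ⟨m, hm, E₀, hE₀c, hE₀⟩ := hmem
  have heqm : ∀ z, AnalyticAt ℂ m z →
      ∑ i ∈ Finset.range (N + 1), (c i).eval z * m z ^ i = 0 := by
    intro z₀ hz₀
    have hh : AnalyticAt ℂ (fun z => ∑ i ∈ Finset.range (N + 1), (c i).eval z * m z ^ i) z₀ :=
      Finset.analyticAt_fun_sum _ fun i _ =>
        ((c i).differentiable.analyticAt z₀).mul (hz₀.pow i)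
    have hfreq : ∃ᶠ z in 𝓝[≠] z₀,
        (fun z => ∑ i ∈ Finset.range (N + 1), (c i).eval z * m z ^ i) z = 0 := by
      rw [frequently_iff]
      intro s hs
      rw [Metric.mem_nhdsWithin_iff] at hs
      obtain ⟨ε, hε, hsub⟩ := hs
      obtain ⟨z, hzball, hzE, hzne⟩ := ball_not_countable (E₀ ∪ E₁) (hE₀c.union hE₁c) z₀ ε hε
      refine ⟨z, hsub ⟨hzball, hzne⟩, ?_⟩
      have h1 : g z = m z := hE₀ z (fun h => hzE (Or.inl h))
      have h2 := hE₁ z (fun h => hzE (Or.inr h))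
      simp only [← h1]
      exact h2
    have := hh.frequently_zero_iff_eventually_zero.1 hfreq
    exact this.self_of_nhds
  obtain ⟨p, q, hq, hpq⟩ := part1 m hm N c hcN heqm
  refine ⟨p, q, hq, E₀ ∪ ({z : ℂ | ¬ AnalyticAt ℂ m z} ∪ {x : ℂ | q.IsRoot x}),
    hE₀c.union ((countable_nonanalytic hm).union (Polynomial.finite_setOf_isRoot hq).countable),
    fun z hz => ?_⟩
  rw [Set.mem_union, Set.mem_union] at hz
  have hzE₀ : z ∉ E₀ := fun h => hz (Or.inl h)
  have hzan : AnalyticAt ℂ m z := by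
    by_contra h
    exact hz (Or.inr (Or.inl h))
  have hzq : q.eval z ≠ 0 := fun h => hz (Or.inr (Or.inr h))
  rw [hE₀ z hzE₀]
  exact hpq z hzan hzq

end AuxMAIRPT


/-- (1) A meromorphic function on `ℂ` that is algebraic over `ℂ(z)` is a rational function.
(2) Consequently, for a linear ODE `y⁽ⁿ⁾ + a₁ y⁽ⁿ⁻¹⁾ + … + aₙ y = 0` with polynomial
coefficients, the extension of `ℂ(z)` obtained by adjoining all (entire) solutions is pure
transcendental: every element of the field generated by the rational functions and the
solutions that is algebraic over `ℂ(z)` is (away from a countable exceptional set where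
the pointwise field operations misbehave) a rational function. -/
theorem meromorphic_algebraic_is_rational_and_pure_transcendence :
    (∀ f : ℂ → ℂ, MeromorphicOn f Set.univ →
      ∀ (N : ℕ) (c : ℕ → Polynomial ℂ), c N ≠ 0 →
      (∀ z, AnalyticAt ℂ f z →
        ∑ i ∈ Finset.range (N + 1), (c i).eval z * f z ^ i = 0) →
      ∃ p q : Polynomial ℂ, q ≠ 0 ∧
        ∀ z, AnalyticAt ℂ f z → q.eval z ≠ 0 → f z = p.eval z / q.eval z)
    ∧
    (∀ (n : ℕ), 1 ≤ n → ∀ a : ℕ → Polynomial ℂ,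
      ∀ g : ℂ → ℂ,
      -- `g` lies in the field generated by `ℂ(z)` and all solutions of the ODE
      (∀ S : Subring (ℂ → ℂ),
        (∀ p q : Polynomial ℂ, q ≠ 0 → (fun z => p.eval z / q.eval z) ∈ S) →
        (∀ f : ℂ → ℂ, Differentiable ℂ f →
          (∀ z, iteratedDeriv n f z +
            ∑ i ∈ Finset.range n, (a (i + 1)).eval z * iteratedDeriv (n - 1 - i) f z = 0) →
          f ∈ S) →
        (∀ h ∈ S, h⁻¹ ∈ S) → g ∈ S) →
      -- if `g` is algebraic over `ℂ(z)` …
      ∀ (N : ℕ) (c : ℕ → Polynomial ℂ), c N ≠ 0 →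
      (∃ E : Set ℂ, E.Countable ∧ ∀ z ∉ E,
        ∑ i ∈ Finset.range (N + 1), (c i).eval z * g z ^ i = 0) →
      -- … then `g` is a rational function
      ∃ p q : Polynomial ℂ, q ≠ 0 ∧
        ∃ E : Set ℂ, E.Countable ∧ ∀ z ∉ E, g z = p.eval z / q.eval z) := by
  exact ⟨fun f hf N c hcN heq => part1 f hf N c hcN heq,
    fun n hn a g hg N c hcN halg => part2 n hn a g hg N c hcN halg⟩
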